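/- Let d ≥ 1, γ > β > 0, a, b ∈ ℝ, set K(z) = a·G_γ(z) + b·G_β(z), and let μ ≠ 0 satisfy 1/μ = a/(√π·√γ) + b/(√π·√β). Then for every unit vector ν ∈ ℝ^d and every V₀ > 0: lim_{α → 0⁺} (1/α²)·∫_{{z ∈ ℝ^d : 0 ≤ ν·z ≤ α·V₀}} K(z)·|ν·z| dz = V₀²/(4μ). -/

import Mathlib

open Real MeasureTheory Filter Topology
open scoped RealInnerProductSpace

/-- The `d`-dimensional heat kernel `G_t(z) = (4πt)^{-d/2} exp(-|z|²/(4t))`. -/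
noncomputable def heatKE (d : ℕ) (t : ℝ) (z : EuclideanSpace ℝ (Fin d)) : ℝ :=
  (4 * Real.pi * t) ^ (-(d : ℝ) / 2) * Real.exp (-‖z‖ ^ 2 / (4 * t))

lemma slab_meas (d : ℕ) (s : ℝ) (B : OrthonormalBasis (Fin d) ℝ (EuclideanSpace ℝ (Fin d)))
    (i0 : Fin d) :
    MeasurableSet {z : EuclideanSpace ℝ (Fin d) | 0 ≤ ⟪B i0, z⟫ ∧ ⟪B i0, z⟫ ≤ s} := by
  have hc : Continuous fun z : EuclideanSpace ℝ (Fin d) => ⟪B i0, z⟫ :=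
    continuous_const.inner continuous_id
  exact (isClosed_Icc.preimage hc).measurableSet

lemma slab_key (d : ℕ) (t s : ℝ)
    (B : OrthonormalBasis (Fin d) ℝ (EuclideanSpace ℝ (Fin d))) (i0 : Fin d) :
    ∀ x : Fin d → ℝ,
      Set.indicator {z : EuclideanSpace ℝ (Fin d) | 0 ≤ ⟪B i0, z⟫ ∧ ⟪B i0, z⟫ ≤ s}
        (fun z => heatKE d t z * |⟪B i0, z⟫|)
        (B.measurableEquiv.symm ((MeasurableEquiv.toLp 2 (Fin d → ℝ)) x))
      = (4*Real.pi*t) ^ (-(d:ℝ)/2) *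
        ∏ i : Fin d, (fun i (y : ℝ) => if i = i0 then
          Set.indicator (Set.Icc 0 s) (fun y => Real.exp (-y^2/(4*t)) * |y|) y
          else Real.exp (-y^2/(4*t))) i (x i) := by
  intro x
  have h1 : ⟪B i0, B.measurableEquiv.symm ((MeasurableEquiv.toLp 2 (Fin d → ℝ)) x)⟫
      = x i0 := by
    rw [← OrthonormalBasis.repr_apply_apply]
    simp [OrthonormalBasis.measurableEquiv, MeasurableEquiv.toLp_apply]
  have h2 : ‖B.measurableEquiv.symm ((MeasurableEquiv.toLp 2 (Fin d → ℝ)) x)‖^2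
      = ∑ i, (x i)^2 := by
    have h : B.measurableEquiv.symm ((MeasurableEquiv.toLp 2 (Fin d → ℝ)) x)
        = B.repr.symm ((MeasurableEquiv.toLp 2 (Fin d → ℝ)) x) := rfl
    rw [h, LinearIsometryEquiv.norm_map, EuclideanSpace.norm_eq, Real.sq_sqrt (by positivity)]
    simp [MeasurableEquiv.toLp_apply, sq_abs]
  have h3 : ∏ i ∈ Finset.univ.erase i0,
      (fun i (y : ℝ) => if i = i0 then
        Set.indicator (Set.Icc 0 s) (fun y => Real.exp (-y^2/(4*t)) * |y|) y
        else Real.exp (-y^2/(4*t))) i (x i)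
      = Real.exp (∑ i ∈ Finset.univ.erase i0, (-(x i)^2/(4*t))) := by
    rw [Real.exp_sum]
    exact Finset.prod_congr rfl fun i hi => if_neg (Finset.mem_erase.mp hi).1
  rw [← Finset.mul_prod_erase Finset.univ _ (Finset.mem_univ i0), h3]
  simp only [if_pos rfl, if_true, ite_true]
  by_cases hx : 0 ≤ x i0 ∧ x i0 ≤ s
  · rw [Set.indicator_of_mem (show _ ∈ {z : EuclideanSpace ℝ (Fin d) |
        0 ≤ ⟪B i0, z⟫ ∧ ⟪B i0, z⟫ ≤ s} by rw [Set.mem_setOf_eq, h1]; exact hx)]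
    rw [Set.indicator_of_mem (Set.mem_Icc.mpr hx)]
    unfold heatKE
    rw [h1, h2]
    have hsplit : Real.exp (-(∑ i, (x i)^2) / (4*t))
        = Real.exp (-(x i0)^2/(4*t)) *
          Real.exp (∑ i ∈ Finset.univ.erase i0, (-(x i)^2/(4*t))) := by
      rw [← Real.exp_add]
      congr 1
      have e1 : (-∑ i : Fin d, x i ^ 2) / (4*t) = ∑ i : Fin d, -x i ^ 2/(4*t) := by
        rw [neg_div, Finset.sum_div, ← Finset.sum_neg_distrib]
        simp [neg_div]
      rw [e1, ← Finset.add_sum_erase Finset.univ (fun i => -x i ^ 2/(4*t))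
        (Finset.mem_univ i0)]
    rw [hsplit]
    ring
  · rw [Set.indicator_of_notMem (show _ ∉ {z : EuclideanSpace ℝ (Fin d) |
        0 ≤ ⟪B i0, z⟫ ∧ ⟪B i0, z⟫ ≤ s} by rw [Set.mem_setOf_eq, h1]; exact hx)]
    rw [Set.indicator_of_notMem (by rw [Set.mem_Icc]; exact hx)]
    ring

lemma slab_f_integrable (d : ℕ) (t s : ℝ) (ht : 0 < t) (i0 i : Fin d) :
    Integrable (fun y : ℝ => if i = i0 then
      Set.indicator (Set.Icc 0 s) (fun y => Real.exp (-y^2/(4*t)) * |y|) y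
      else Real.exp (-y^2/(4*t))) := by
  by_cases hi : i = i0
  · simp only [if_pos hi]
    rw [integrable_indicator_iff measurableSet_Icc]
    exact (Continuous.continuousOn (by continuity)).integrableOn_compact isCompact_Icc
  · simp only [if_neg hi]
    have h : ∀ y : ℝ, -y^2/(4*t) = -(1/(4*t)) * y^2 := fun y => by ring
    simp_rw [h]
    exact integrable_exp_neg_mul_sq (by positivity)

lemma slab_integrable (d : ℕ) (t s : ℝ) (ht : 0 < t)
    (B : OrthonormalBasis (Fin d) ℝ (EuclideanSpace ℝ (Fin d))) (i0 : Fin d) :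
    IntegrableOn (fun z => heatKE d t z * |⟪B i0, z⟫|)
      {z : EuclideanSpace ℝ (Fin d) | 0 ≤ ⟪B i0, z⟫ ∧ ⟪B i0, z⟫ ≤ s} volume := by
  rw [← integrable_indicator_iff (slab_meas d s B i0)]
  set m1 := (MeasurableEquiv.toLp 2 (Fin d → ℝ))
  set m2 := B.measurableEquiv.symm
  have emb : MeasurableEmbedding (fun x : Fin d → ℝ => m2 (m1 x)) :=
    (MeasurableEquiv.measurableEmbedding _).comp (MeasurableEquiv.measurableEmbedding _)
  have hmp : MeasurePreserving (fun x : Fin d → ℝ => m2 (m1 x)) volume volume :=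
    (MeasurePreserving.symm _ B.measurePreserving_measurableEquiv).comp
      (MeasurePreserving.symm _ (EuclideanSpace.volume_preserving_symm_measurableEquiv_toLp (Fin d)))
  rw [← hmp.integrable_comp_emb emb]
  have : (Set.indicator {z : EuclideanSpace ℝ (Fin d) | 0 ≤ ⟪B i0, z⟫ ∧ ⟪B i0, z⟫ ≤ s}
      (fun z => heatKE d t z * |⟪B i0, z⟫|)) ∘ (fun x : Fin d → ℝ => m2 (m1 x))
      = fun x : Fin d → ℝ => (4*Real.pi*t) ^ (-(d:ℝ)/2) *
        ∏ i : Fin d, (fun i (y : ℝ) => if i = i0 then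
          Set.indicator (Set.Icc 0 s) (fun y => Real.exp (-y^2/(4*t)) * |y|) y
          else Real.exp (-y^2/(4*t))) i (x i) := funext fun x => slab_key d t s B i0 x
  rw [this]
  exact (Integrable.fintype_prod (fun i => slab_f_integrable d t s ht i0 i)).const_mul _

lemma slab_integral (d : ℕ) (t s : ℝ) (ht : 0 < t)
    (B : OrthonormalBasis (Fin d) ℝ (EuclideanSpace ℝ (Fin d))) (i0 : Fin d) :
    ∫ z in {z : EuclideanSpace ℝ (Fin d) | 0 ≤ ⟪B i0, z⟫ ∧ ⟪B i0, z⟫ ≤ s},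
      heatKE d t z * |⟪B i0, z⟫|
    = (4*Real.pi*t) ^ (-(d:ℝ)/2) * Real.sqrt (4*Real.pi*t) ^ (d - 1) *
      ∫ y in Set.Icc (0:ℝ) s, Real.exp (-y^2/(4*t)) * |y| := by
  rw [← integral_indicator (slab_meas d s B i0)]
  rw [← (MeasurePreserving.symm _ B.measurePreserving_measurableEquiv).integral_comp']
  rw [← (MeasurePreserving.symm _
      (EuclideanSpace.volume_preserving_symm_measurableEquiv_toLp (Fin d))).integral_comp']
  simp_rw [MeasurableEquiv.symm_symm, slab_key d t s B i0]
  rw [integral_const_mul, MeasureTheory.integral_fintype_prod_volume_eq_prod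
    (f := fun i (y:ℝ) => if i = i0 then Set.indicator (Set.Icc 0 s)
      (fun y => Real.exp (-y^2/(4*t)) * |y|) y else Real.exp (-y^2/(4*t)))]
  have hg : ∫ y : ℝ, Real.exp (-y^2/(4*t)) = Real.sqrt (4*Real.pi*t) := by
    have h : ∀ y : ℝ, -y^2/(4*t) = -(1/(4*t)) * y^2 := by intro y; ring
    simp_rw [h]
    rw [integral_gaussian]
    congr 1
    field_simp
  rw [← Finset.mul_prod_erase Finset.univ _ (Finset.mem_univ i0)]
  have h5 : (∫ y : ℝ, if i0 = i0 then Set.indicator (Set.Icc 0 s)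
      (fun y => Real.exp (-y^2/(4*t)) * |y|) y else Real.exp (-y^2/(4*t)))
      = ∫ y in Set.Icc (0:ℝ) s, Real.exp (-y^2/(4*t)) * |y| := by
    simp only [eq_self_iff_true, if_true, integral_indicator measurableSet_Icc]
  have h4 : (∏ i ∈ Finset.univ.erase i0, ∫ y : ℝ, if i = i0 then Set.indicator (Set.Icc 0 s)
      (fun y => Real.exp (-y^2/(4*t)) * |y|) y else Real.exp (-y^2/(4*t)))
      = Real.sqrt (4*Real.pi*t) ^ (d - 1) := by
    have hcongr : ∀ i ∈ Finset.univ.erase i0, (∫ y : ℝ, if i = i0 then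
        Set.indicator (Set.Icc 0 s) (fun y => Real.exp (-y^2/(4*t)) * |y|) y
        else Real.exp (-y^2/(4*t))) = Real.sqrt (4*Real.pi*t) := by
      intro i hi
      simp only [if_neg (Finset.mem_erase.mp hi).1]
      exact hg
    rw [Finset.prod_congr rfl hcongr, Finset.prod_const,
      Finset.card_erase_of_mem (Finset.mem_univ i0), Finset.card_univ, Fintype.card_fin]
  rw [h5, h4]
  ring

lemma oned_integral (t s : ℝ) (ht : 0 < t) (hs : 0 ≤ s) :
    ∫ y in Set.Icc (0:ℝ) s, Real.exp (-y^2/(4*t)) * |y|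
      = 2*t*(1 - Real.exp (-s^2/(4*t))) := by
  rw [integral_Icc_eq_integral_Ioc]
  have hc : ∀ y ∈ Set.Ioc (0:ℝ) s, Real.exp (-y^2/(4*t)) * |y| = Real.exp (-y^2/(4*t)) * y := by
    intro y hy; rw [abs_of_pos hy.1]
  rw [setIntegral_congr_fun measurableSet_Ioc hc]
  rw [← intervalIntegral.integral_of_le hs]
  have hD : ∀ y ∈ Set.uIcc (0:ℝ) s, HasDerivAt (fun y : ℝ => -2*t*Real.exp (-y^2/(4*t)))
      (Real.exp (-y^2/(4*t)) * y) y := by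
    intro y _
    have h1 : HasDerivAt (fun y : ℝ => -y^2/(4*t)) (-y/(2*t)) y := by
      have := (hasDerivAt_pow 2 y).neg.div_const (4*t)
      refine this.congr_deriv ?_
      ring
    have := ((h1.exp).const_mul (-2*t))
    refine this.congr_deriv ?_
    field_simp
  rw [intervalIntegral.integral_eq_sub_of_hasDerivAt hD]
  · simp only [neg_zero, zero_pow, ne_eq, OfNat.ofNat_ne_zero, not_false_eq_true, zero_div,
      Real.exp_zero]
    ring
  · apply Continuous.intervalIntegrable
    continuity

lemma const_collapse (d : ℕ) (hd : 1 ≤ d) (t : ℝ) (ht : 0 < t) :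
    (4*Real.pi*t) ^ (-(d:ℝ)/2) * Real.sqrt (4*Real.pi*t) ^ (d - 1)
      = (4*Real.pi*t) ^ (-(1:ℝ)/2) := by
  have hx : (0:ℝ) < 4*Real.pi*t := by positivity
  rw [← Real.rpow_natCast (Real.sqrt (4*Real.pi*t)) (d-1), Real.sqrt_eq_rpow,
    ← Real.rpow_mul hx.le, ← Real.rpow_add hx]
  congr 1
  rw [Nat.cast_sub hd]
  push_cast
  ring

lemma slab_closed (d : ℕ) (hd : 1 ≤ d) (t s : ℝ) (ht : 0 < t) (hs : 0 ≤ s)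
    (B : OrthonormalBasis (Fin d) ℝ (EuclideanSpace ℝ (Fin d))) (i0 : Fin d) :
    ∫ z in {z : EuclideanSpace ℝ (Fin d) | 0 ≤ ⟪B i0, z⟫ ∧ ⟪B i0, z⟫ ≤ s},
      heatKE d t z * |⟪B i0, z⟫|
    = (4*Real.pi*t) ^ (-(1:ℝ)/2) * (2*t*(1 - Real.exp (-s^2/(4*t)))) := by
  rw [slab_integral d t s ht B i0, oned_integral t s ht hs, const_collapse d hd t ht]

lemma key_lim (c : ℝ) :
    Tendsto (fun α : ℝ => (1 - Real.exp (-(c*α^2)))/α^2) (𝓝[>] 0) (𝓝 c) := by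
  have h1 : HasDerivAt (fun u : ℝ => 1 - Real.exp (-(c*u))) c 0 := by
    have h2 : HasDerivAt (fun u : ℝ => -(c*u)) (-c) 0 := by
      exact (((hasDerivAt_id (0:ℝ)).const_mul c).neg).congr_deriv (by ring)
    have := (h2.exp).const_sub 1
    simpa using this
  have hslope := hasDerivAt_iff_tendsto_slope.mp h1
  have hsq : Tendsto (fun α : ℝ => α^2) (𝓝[>] 0) (𝓝[≠] 0) := by
    apply Tendsto.mono_right _ (nhdsWithin_mono _ (fun x hx => ne_of_gt hx))
    apply tendsto_nhdsWithin_of_tendsto_nhds_of_eventually_within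
    · exact tendsto_nhdsWithin_of_tendsto_nhds (by simpa using (continuous_pow 2).tendsto (0:ℝ))
    · filter_upwards [self_mem_nhdsWithin] with α hα
      exact pow_pos (show (0:ℝ) < α from hα) 2
  have := hslope.comp hsq
  apply this.congr
  intro α
  simp only [Function.comp_apply, slope_def_field]
  norm_num

lemma rpow_half_inv (t : ℝ) (ht : 0 < t) :
    (4*Real.pi*t) ^ (-(1:ℝ)/2) = (2 * (Real.sqrt Real.pi * Real.sqrt t))⁻¹ := by
  have h4 : (0:ℝ) < 4*Real.pi*t := by positivity
  rw [neg_div, Real.rpow_neg h4.le, ← Real.sqrt_eq_rpow]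
  congr 1
  rw [show 4*Real.pi*t = (2:ℝ)^2 * (Real.pi*t) by ring, Real.sqrt_mul (by positivity),
    Real.sqrt_sq (by norm_num), Real.sqrt_mul Real.pi_pos.le]

/-- with `K = a G_γ + b G_β` and `1/μ = a/(√π√γ) + b/(√π√β)`,
`lim_{α→0⁺} α⁻²·∫_{0 ≤ ν·z ≤ αV₀} K(z)|ν·z| dz = V₀²/(4μ)`. -/
theorem stmt_17 (d : ℕ) (hd : 1 ≤ d) (γ β : ℝ) (hβ0 : 0 < β) (hβγ : β < γ)
    (a b μ : ℝ) (hμ : μ ≠ 0)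
    (hμab : 1 / μ = a / (Real.sqrt Real.pi * Real.sqrt γ) +
      b / (Real.sqrt Real.pi * Real.sqrt β))
    (ν : EuclideanSpace ℝ (Fin d)) (hν : ‖ν‖ = 1) (V₀ : ℝ) (hV₀ : 0 < V₀) :
    Tendsto (fun α : ℝ =>
        1 / α ^ 2 * ∫ z in {z : EuclideanSpace ℝ (Fin d) | 0 ≤ ⟪ν, z⟫ ∧ ⟪ν, z⟫ ≤ α * V₀},
          (a * heatKE d γ z + b * heatKE d β z) * |⟪ν, z⟫|)
      (𝓝[>] 0) (𝓝 (V₀ ^ 2 / (4 * μ))) := by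
  have hγ0 : 0 < γ := hβ0.trans hβγ
  obtain ⟨B, hB⟩ : ∃ B : OrthonormalBasis (Fin d) ℝ (EuclideanSpace ℝ (Fin d)),
      B ⟨0, hd⟩ = ν := by
    have hcard : Module.finrank ℝ (EuclideanSpace ℝ (Fin d)) = Fintype.card (Fin d) := by simp
    have ho : Orthonormal ℝ ((({⟨0, hd⟩} : Set (Fin d))).restrict (fun _ : Fin d => ν)) := by
      constructor
      · intro i; exact hν
      · intro i j hij
        exact absurd (Subtype.ext ((i.2 : (i : Fin d) = ⟨0, hd⟩).trans
          ((j.2 : (j : Fin d) = ⟨0, hd⟩)).symm)) hij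
    obtain ⟨B, hB⟩ := ho.exists_orthonormalBasis_extension_of_card_eq hcard
    exact ⟨B, hB _ rfl⟩
  rw [← hB]
  set i0 : Fin d := ⟨0, hd⟩
  have hval : (a * ((4*Real.pi*γ) ^ (-(1:ℝ)/2) * (2*γ))) * (V₀^2/(4*γ)) +
      (b * ((4*Real.pi*β) ^ (-(1:ℝ)/2) * (2*β))) * (V₀^2/(4*β)) = V₀^2/(4*μ) := by
    rw [rpow_half_inv γ hγ0, rpow_half_inv β hβ0]
    have h1 : V₀^2/(4*μ) = V₀^2/4 * (1/μ) := by ring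
    rw [h1, hμab]
    have hp : Real.sqrt Real.pi ≠ 0 := by positivity
    have hg : Real.sqrt γ ≠ 0 := by positivity
    have hq : Real.sqrt β ≠ 0 := by positivity
    field_simp
  have hlim : Tendsto (fun α : ℝ =>
      (a * ((4*Real.pi*γ) ^ (-(1:ℝ)/2) * (2*γ))) * ((1 - Real.exp (-(V₀^2/(4*γ)*α^2)))/α^2) +
      (b * ((4*Real.pi*β) ^ (-(1:ℝ)/2) * (2*β))) * ((1 - Real.exp (-(V₀^2/(4*β)*α^2)))/α^2))
      (𝓝[>] 0)
      (𝓝 ((a * ((4*Real.pi*γ) ^ (-(1:ℝ)/2) * (2*γ))) * (V₀^2/(4*γ)) +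
        (b * ((4*Real.pi*β) ^ (-(1:ℝ)/2) * (2*β))) * (V₀^2/(4*β)))) :=
    ((key_lim _).const_mul _).add ((key_lim _).const_mul _)
  rw [← hval]
  apply Tendsto.congr' _ hlim
  filter_upwards [self_mem_nhdsWithin] with α hα
  have hα0 : (0:ℝ) < α := hα
  have hs : 0 ≤ α * V₀ := le_of_lt (mul_pos hα0 hV₀)
  have hsplit : ∀ z : EuclideanSpace ℝ (Fin d),
      (a * heatKE d γ z + b * heatKE d β z) * |⟪B i0, z⟫|
      = a * (heatKE d γ z * |⟪B i0, z⟫|) + b * (heatKE d β z * |⟪B i0, z⟫|) := fun z => by ring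
  have hint : ∫ z in {z : EuclideanSpace ℝ (Fin d) | 0 ≤ ⟪B i0, z⟫ ∧ ⟪B i0, z⟫ ≤ α * V₀},
      (a * heatKE d γ z + b * heatKE d β z) * |⟪B i0, z⟫|
      = a * (∫ z in {z : EuclideanSpace ℝ (Fin d) | 0 ≤ ⟪B i0, z⟫ ∧ ⟪B i0, z⟫ ≤ α * V₀},
          heatKE d γ z * |⟪B i0, z⟫|)
        + b * (∫ z in {z : EuclideanSpace ℝ (Fin d) | 0 ≤ ⟪B i0, z⟫ ∧ ⟪B i0, z⟫ ≤ α * V₀},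
          heatKE d β z * |⟪B i0, z⟫|) := by
    simp_rw [hsplit]
    rw [integral_add ((slab_integrable d γ (α*V₀) hγ0 B i0).const_mul a)
      ((slab_integrable d β (α*V₀) hβ0 B i0).const_mul b), integral_const_mul, integral_const_mul]
  rw [hint, slab_closed d hd γ (α*V₀) hγ0 hs B i0, slab_closed d hd β (α*V₀) hβ0 hs B i0,
    show -(α*V₀)^2/(4*γ) = -(V₀^2/(4*γ)*α^2) by ring,
    show -(α*V₀)^2/(4*β) = -(V₀^2/(4*β)*α^2) by ring]
  ring
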